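/- arXiv:1303.4673 — 2 statements merged into one kernel-verified Lean document; each statement's English description precedes it below -/
import Mathlib

section
/- In any complete edge coloring of a geometric graph of order n, there are at most n color classes of size one. -/
open scoped Classical

abbrev Pt : Type := ℝ × ℝ

/-- No three distinct points of `S` are collinear. -/
def GenPos (S : Finset Pt) : Prop :=
  ∀ p ∈ S, ∀ q ∈ S, ∀ r ∈ S, p ≠ q → q ≠ r → p ≠ r → ¬ Collinear ℝ ({p, q, r} : Set Pt)

/-- The closed straight-line segment of an (unordered) edge. -/
noncomputable def seg2 : Sym2 Pt → Set Pt :=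
  Sym2.lift ⟨fun p q => segment ℝ p q, fun p q => segment_symm ℝ p q⟩

/-- Two edges intersect: they share a point (common endpoint or crossing). -/
def SInter (e f : Sym2 Pt) : Prop := (seg2 e ∩ seg2 f).Nonempty

/-- A geometric graph: vertices in general position, straight-line edges. -/
structure GeomGraph where
  verts : Finset Pt
  edges : Finset (Sym2 Pt)
  genpos : GenPos verts
  edge_mem : ∀ e ∈ edges, ∀ p ∈ e, p ∈ verts
  edge_ne : ∀ e ∈ edges, ¬ e.IsDiag

/-- A coloring is complete on edge set `E` if every pair of used colors appears
on a pair of intersecting edges. -/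
def CompleteOn (E : Finset (Sym2 Pt)) (c : Sym2 Pt → ℕ) : Prop :=
  ∀ i ∈ E.image c, ∀ j ∈ E.image c, i ≠ j →
    ∃ e ∈ E, ∃ f ∈ E, c e = i ∧ c f = j ∧ SInter e f

/-- A coloring is proper if same-colored edges are disjoint. -/
def ProperOn (E : Finset (Sym2 Pt)) (c : Sym2 Pt → ℕ) : Prop :=
  ∀ e ∈ E, ∀ f ∈ E, e ≠ f → c e = c f → ¬ SInter e f

/-- Points in convex position. -/
def ConvexPos (S : Finset Pt) : Prop :=
  ∀ p ∈ S, p ∉ convexHull ℝ ((S : Set Pt) \ {p})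

/-- Edge set of the complete geometric graph on `S`. -/
noncomputable def edgeSet (S : Finset Pt) : Finset (Sym2 Pt) :=
  S.sym2.filter (fun e => ¬ e.IsDiag)

def ShareEndpoint (e f : Sym2 Pt) : Prop := ∃ p : Pt, p ∈ e ∧ p ∈ f

def Crossing (e f : Sym2 Pt) : Prop := SInter e f ∧ ¬ ShareEndpoint e f

/-- Number of unordered pairs of distinct edges of `E` satisfying the
(symmetric) relation `P`. -/
noncomputable def pairCount (E : Finset (Sym2 Pt)) (P : Sym2 Pt → Sym2 Pt → Prop) : ℕ :=
  ((E ×ˢ E).filter (fun q => q.1 ≠ q.2 ∧ P q.1 q.2)).card / 2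

/-- The `k`-th vertex (clockwise) of the regular `n`-gon. -/
noncomputable def pt (n k : ℕ) : Pt :=
  (Real.cos (2 * Real.pi * k / n), -Real.sin (2 * Real.pi * k / n))

/-- Vertex set of the regular `n`-gon. -/
noncomputable def ngon (n : ℕ) : Finset Pt := (Finset.range n).image (pt n)

/-- `pq` is a halving edge of `S`: each open half-plane bounded by the line
through `p` and `q` contains at least `⌊(n-2)/2⌋` points of `S`. -/
def IsHalvingPts (S : Finset Pt) (p q : Pt) : Prop :=
  (S.card - 2) / 2 ≤ (S.filter (fun r =>
      0 < (q.1 - p.1) * (r.2 - p.2) - (q.2 - p.2) * (r.1 - p.1))).card ∧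
  (S.card - 2) / 2 ≤ (S.filter (fun r =>
      (q.1 - p.1) * (r.2 - p.2) - (q.2 - p.2) * (r.1 - p.1) < 0)).card

/-- The edge `e_{i,j}` of the regular `n`-gon is halving. -/
def Halving (n i j : ℕ) : Prop := IsHalvingPts (ngon n) (pt n i) (pt n j)

/-- The edges `e_{i,j}` and `e_{i',j'}` of the regular `n`-gon intersect. -/
def EInter (n i j i' j' : ℕ) : Prop :=
  (segment ℝ (pt n i) (pt n j) ∩ segment ℝ (pt n i') (pt n j')).Nonempty

/-- `(e_{i,j}, e_{j+1,k})` is a halving pair. -/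
def HalvingPair (n i j k : ℕ) : Prop :=
  pt n i ≠ pt n j ∧ pt n (j + 1) ≠ pt n k ∧ ¬ EInter n i j (j + 1) k ∧
  (Halving n i (j + 1) ∨ Halving n i k ∨ Halving n j k)

noncomputable def xprod (p q r : Pt) : ℝ :=
  (q.1 - p.1) * (r.2 - p.2) - (q.2 - p.2) * (r.1 - p.1)

lemma vadd_fst (t : ℝ) (v p : Pt) : (t • v +ᵥ p).1 = t * v.1 + p.1 := rfl
lemma vadd_snd (t : ℝ) (v p : Pt) : (t • v +ᵥ p).2 = t * v.2 + p.2 := rfl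

lemma collinear_of_xprod {p q r : Pt} (h : xprod p q r = 0) :
    Collinear ℝ ({p, q, r} : Set Pt) := by
  have hp : p ∈ ({p, q, r} : Set Pt) := by simp
  rw [collinear_iff_of_mem hp]
  by_cases hpq : q = p
  · refine ⟨r - p, fun x hx => ?_⟩
    simp only [Set.mem_insert_iff, Set.mem_singleton_iff] at hx
    rcases hx with hx | hx | hx <;> subst hx
    · exact ⟨0, by simp⟩
    · exact ⟨0, by simp [hpq]⟩
    · refine ⟨1, ?_⟩
      rw [Prod.ext_iff, vadd_fst, vadd_snd]
      constructor <;> simp [Prod.fst_sub, Prod.snd_sub]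
  · have hq : q ≠ p := hpq
    refine ⟨q - p, fun x hx => ?_⟩
    simp only [Set.mem_insert_iff, Set.mem_singleton_iff] at hx
    rcases hx with hx | hx | hx <;> subst hx
    · exact ⟨0, by simp⟩
    · refine ⟨1, ?_⟩
      rw [Prod.ext_iff, vadd_fst, vadd_snd]
      constructor <;> simp [Prod.fst_sub, Prod.snd_sub]
    · unfold xprod at h
      by_cases h1 : q.1 - p.1 = 0
      · have h2 : q.2 - p.2 ≠ 0 := fun h2 =>
          hq (Prod.ext (by linarith [sub_eq_zero.mp h1] : q.1 = p.1)
            (by linarith [sub_eq_zero.mp h2] : q.2 = p.2))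
        have hx1 : x.1 - p.1 = 0 := by
          have h3 : (q.2 - p.2) * (x.1 - p.1) = 0 := by
            linear_combination (x.2 - p.2) * h1 - h
          rcases mul_eq_zero.mp h3 with h' | h'
          · exact absurd h' h2
          · exact h'
        refine ⟨(x.2 - p.2) / (q.2 - p.2), ?_⟩
        rw [Prod.ext_iff, vadd_fst, vadd_snd]
        constructor
        · show x.1 = _ * (q - p).1 + p.1
          rw [Prod.fst_sub, h1]
          simp; linarith
        · show x.2 = _ * (q - p).2 + p.2
          rw [Prod.snd_sub]
          field_simp; ring
      · refine ⟨(x.1 - p.1) / (q.1 - p.1), ?_⟩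
        rw [Prod.ext_iff, vadd_fst, vadd_snd]
        constructor
        · show x.1 = _ * (q - p).1 + p.1
          rw [Prod.fst_sub]; field_simp; ring
        · show x.2 = _ * (q - p).2 + p.2
          rw [Prod.snd_sub]; field_simp; linarith [h]

lemma seg2_mk (u v : Pt) : seg2 s(u, v) = segment ℝ u v := rfl

lemma xprod_segment (u v p w x : Pt) (hx : x ∈ segment ℝ p w) :
    ∃ a b : ℝ, 0 ≤ a ∧ 0 ≤ b ∧ a + b = 1 ∧ a • p + b • w = x ∧
      xprod u v x = a * xprod u v p + b * xprod u v w := by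
  obtain ⟨a, b, ha, hb, hab, hx⟩ := hx
  refine ⟨a, b, ha, hb, hab, hx, ?_⟩
  have h1 : x.1 = a * p.1 + b * w.1 := by rw [← hx]; simp [Prod.smul_fst]
  have h2 : x.2 = a * p.2 + b * w.2 := by rw [← hx]; simp [Prod.smul_snd]
  unfold xprod
  rw [h1, h2]
  linear_combination ((v.1 - u.1) * u.2 - (v.2 - u.2) * u.1) * hab

def ExtAt (T : Finset (Sym2 Pt)) (u v : Pt) : Prop :=
  ∀ w : Pt, s(u, w) ∈ T → w ≠ v → 0 < xprod u v w

lemma thrackle_card_le (S : Finset Pt) (hS : GenPos S) (T : Finset (Sym2 Pt))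
    (hmem : ∀ e ∈ T, ∀ p ∈ e, p ∈ S) (hdiag : ∀ e ∈ T, ¬ e.IsDiag)
    (hint : ∀ e ∈ T, ∀ f ∈ T, e ≠ f → SInter e f) : T.card ≤ S.card := by
  have hx0 : ∀ u v w : Pt, s(u, v) ∈ T → s(u, w) ∈ T → w ≠ v → xprod u v w ≠ 0 := by
    intro u v w h1 h2 hwv h0
    have huv : u ≠ v := fun h => hdiag _ h1 (Sym2.mk_isDiag_iff.mpr h)
    have huw : u ≠ w := fun h => hdiag _ h2 (Sym2.mk_isDiag_iff.mpr h)
    have hu : u ∈ S := hmem _ h1 u (Sym2.mem_mk_left _ _)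
    have hv : v ∈ S := hmem _ h1 v (Sym2.mem_mk_right _ _)
    have hw : w ∈ S := hmem _ h2 w (Sym2.mem_mk_right _ _)
    exact hS u hu v hv w hw huv (fun h => hwv h.symm) huw (collinear_of_xprod h0)
  have dich : ∀ u v : Pt, s(u, v) ∈ T → ExtAt T u v ∨ ExtAt T v u := by
    intro u v he
    by_contra hcon
    push_neg at hcon
    obtain ⟨h1, h2⟩ := hcon
    unfold ExtAt at h1 h2
    push_neg at h1 h2
    obtain ⟨w1, hw1T, hw1v, hw1⟩ := h1
    obtain ⟨w2, hw2T, hw2u, hw2⟩ := h2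
    have huv : u ≠ v := fun h => hdiag _ he (Sym2.mk_isDiag_iff.mpr h)
    have hlt1 : xprod u v w1 < 0 := lt_of_le_of_ne hw1 (hx0 u v w1 he hw1T hw1v)
    have hlt2 : 0 < xprod u v w2 := by
      have h2' : xprod v u w2 < 0 :=
        lt_of_le_of_ne hw2 (hx0 v u w2 (by rwa [Sym2.eq_swap]) hw2T hw2u)
      have hsw : xprod u v w2 = - xprod v u w2 := by unfold xprod; ring
      linarith
    have hfne : s(u, w1) ≠ s(v, w2) := by
      intro h
      rw [Sym2.eq_iff] at h
      rcases h with ⟨h1', _⟩ | ⟨h1', _⟩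
      · exact huv h1'
      · exact hw2u h1'.symm
    obtain ⟨x, hxm⟩ := hint _ hw1T _ hw2T hfne
    obtain ⟨hxa, hxb⟩ := hxm
    rw [seg2_mk] at hxa hxb
    obtain ⟨a1, b1, ha1, hb1, hab1, hxe1, hv1⟩ := xprod_segment u v u w1 x hxa
    obtain ⟨a2, b2, ha2, hb2, hab2, hxe2, hv2⟩ := xprod_segment u v v w2 x hxb
    have z1 : xprod u v u = 0 := by unfold xprod; ring
    have z2 : xprod u v v = 0 := by unfold xprod; ring
    rw [z1] at hv1
    rw [z2] at hv2
    have hb10 : b1 = 0 := by nlinarith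
    have hb20 : b2 = 0 := by nlinarith
    have hxu : x = u := by
      rw [hb10] at hab1 hxe1
      simp at hab1
      rw [hab1] at hxe1
      simpa using hxe1.symm
    have hxv : x = v := by
      rw [hb20] at hab2 hxe2
      simp at hab2
      rw [hab2] at hxe2
      simpa using hxe2.symm
    exact huv (hxu ▸ hxv)
  have uniq : ∀ u v v' : Pt, s(u, v) ∈ T → s(u, v') ∈ T → ExtAt T u v → ExtAt T u v' → v = v' := by
    intro u v v' h1 h2 e1 e2
    by_contra hne
    have p1 := e1 v' h2 (fun h => hne h.symm)
    have p2 := e2 v h1 hne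
    have hsw : xprod u v v' = - xprod u v' v := by unfold xprod; ring
    linarith
  have key : ∀ e ∈ T, ∃ u v : Pt, e = s(u, v) ∧ ExtAt T u v := by
    intro e he
    obtain ⟨u, v, rfl⟩ : ∃ u v, e = s(u, v) := by
      induction e using Sym2.ind with
      | _ u v => exact ⟨u, v, rfl⟩
    rcases dich u v he with h | h
    · exact ⟨u, v, rfl, h⟩
    · exact ⟨v, u, (Sym2.eq_swap).symm, h⟩
  classical
  set F : Sym2 Pt → Pt := fun e =>
    if h : ∃ u v : Pt, e = s(u, v) ∧ ExtAt T u v then h.choose else (0, 0) with hF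
  have hFspec : ∀ e ∈ T, ∃ v, e = s(F e, v) ∧ ExtAt T (F e) v := by
    intro e he
    have h : ∃ u v : Pt, e = s(u, v) ∧ ExtAt T u v := key e he
    rw [hF]
    simp only [dif_pos h]
    exact h.choose_spec
  apply Finset.card_le_card_of_injOn F
  · intro e he
    obtain ⟨v, hev, _⟩ := hFspec e he
    exact hmem e he (F e) (Sym2.mem_iff_exists.mpr ⟨v, hev⟩)
  · intro e1 he1 e2 he2 hFe
    obtain ⟨v1, hev1, hext1⟩ := hFspec e1 (by simpa using he1)
    obtain ⟨v2, hev2, hext2⟩ := hFspec e2 (by simpa using he2)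
    rw [hFe] at hev1
    have hext1' : ExtAt T (F e2) v1 := hFe ▸ hext1
    have hT1 : s(F e2, v1) ∈ T := by rw [← hev1]; simpa using he1
    have hT2 : s(F e2, v2) ∈ T := by rw [← hev2]; simpa using he2
    have hv12 := uniq (F e2) v1 v2 hT1 hT2 hext1' hext2
    rw [hev1, hv12, ← hev2]


/-- In any complete edge coloring of a geometric graph of order `n`, there are at most
`n` color classes of size one. -/
theorem singleton_classes_le_order (G : GeomGraph) (c : Sym2 Pt → ℕ)
    (hc : CompleteOn G.edges c) :
    ((G.edges.image c).filter
        (fun i => (G.edges.filter (fun e => c e = i)).card = 1)).card ≤ G.verts.card := by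
  classical
  set E := G.edges with hE
  set T : Finset (Sym2 Pt) :=
    E.filter (fun e => (E.filter (fun f => c f = c e)).card = 1) with hT
  have hTE : ∀ e ∈ T, e ∈ E := fun e he => (Finset.mem_filter.mp he).1
  have huniqcl : ∀ e ∈ T, ∀ g ∈ E, c g = c e → g = e := by
    intro e he g hg hcg
    have hcard : (E.filter (fun f => c f = c e)).card = 1 := (Finset.mem_filter.mp he).2
    obtain ⟨x, hx⟩ := Finset.card_eq_one.mp hcard
    have h1 : e ∈ E.filter (fun f => c f = c e) :=
      Finset.mem_filter.mpr ⟨hTE e he, rfl⟩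
    have h2 : g ∈ E.filter (fun f => c f = c e) := Finset.mem_filter.mpr ⟨hg, hcg⟩
    rw [hx, Finset.mem_singleton] at h1 h2
    rw [h2, h1]
  have himg : (E.image c).filter (fun i => (E.filter (fun e => c e = i)).card = 1)
      = T.image c := by
    ext i
    simp only [hT, Finset.mem_filter, Finset.mem_image]
    constructor
    · rintro ⟨⟨e, heE, rfl⟩, hcard⟩
      exact ⟨e, ⟨heE, hcard⟩, rfl⟩
    · rintro ⟨e, ⟨heE, hcard⟩, rfl⟩
      exact ⟨⟨e, heE, rfl⟩, hcard⟩
  rw [himg]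
  have hinj : Set.InjOn c T := by
    intro e he f hf hef
    exact huniqcl f (by simpa using hf) e (hTE e (by simpa using he)) hef
  rw [Finset.card_image_of_injOn hinj]
  apply thrackle_card_le G.verts G.genpos T
  · exact fun e he => G.edge_mem e (hTE e he)
  · exact fun e he => G.edge_ne e (hTE e he)
  · intro e he f hf hef
    have hce : c e ≠ c f := by
      intro h
      exact hef (huniqcl f hf e (hTE e he) h)
    obtain ⟨e', he'E, f', hf'E, hce', hcf', hintef⟩ :=
      hc (c e) (Finset.mem_image_of_mem c (hTE e he))
        (c f) (Finset.mem_image_of_mem c (hTE f hf)) hce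
    have h1 : e' = e := huniqcl e he e' he'E hce'
    have h2 : f' = f := huniqcl f hf f' hf'E hcf'
    rw [← h1, ← h2]
    exact hintef
end

section
/- In a complete convex geometric graph of even order n, every almost-halving edge intersects every halving edge. -/
open scoped Classical

section AuxAHIH
open Real
noncomputable def Pp (x : ℝ) : Pt := (Real.cos (2*π*x), -Real.sin (2*π*x))
def Xc (p q r : Pt) : ℝ := (q.1 - p.1) * (r.2 - p.2) - (q.2 - p.2) * (r.1 - p.1)

lemma Pp_add_int (x : ℝ) (t : ℤ) : Pp (x + t) = Pp x := by
  simp only [Pp]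
  have h1 : 2*π*(x + t) = 2*π*x + t*(2*π) := by ring
  rw [h1, Real.cos_add_int_mul_two_pi, Real.sin_add_int_mul_two_pi]

lemma pt_eq_Pp (n k : ℕ) : pt n k = Pp ((k:ℝ)/n) := by
  simp only [pt, Pp, mul_div_assoc]

lemma pt_mod (n : ℕ) (hn : 0 < n) (k : ℕ) : pt n k = Pp (((k % n : ℕ):ℝ)/n) := by
  rw [pt_eq_Pp]
  have hk : (k:ℝ) = (k % n : ℕ) + (n:ℝ) * (k / n : ℕ) := by
    exact_mod_cast (Nat.mod_add_div k n).symm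
  have hnne : (n:ℝ) ≠ 0 := by positivity
  have : (k:ℝ)/n = ((k % n : ℕ):ℝ)/n + ((k / n : ℕ) : ℤ) := by
    rw [Int.cast_natCast, hk]; field_simp
  rw [this, Pp_add_int]

lemma pt_congr {n : ℕ} (hn : 0 < n) {k l : ℕ} (h : (k : ZMod n) = (l : ZMod n)) :
    pt n k = pt n l := by
  have h' : k % n = l % n := (ZMod.natCast_eq_natCast_iff k l n).mp h
  rw [pt_mod n hn k, pt_mod n hn l, h']

lemma sin_sign {v : ℝ} (h0 : 0 < v) (h1 : v < 1) : 0 < Real.sin (π * v) := by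
  have hπ := Real.pi_pos
  exact Real.sin_pos_of_pos_of_lt_pi (by positivity) (by nlinarith)

lemma Pp_injOn {x y : ℝ} (hx0 : 0 ≤ x) (hx1 : x < 1) (hy0 : 0 ≤ y) (hy1 : y < 1)
    (h : Pp x = Pp y) : x = y := by
  have hc : Real.cos (2*π*x) = Real.cos (2*π*y) := congrArg Prod.fst h
  have hs : Real.sin (2*π*x) = Real.sin (2*π*y) := by
    have := congrArg Prod.snd h; simp only [Pp] at this; linarith [this]
  have h1 : Real.cos (2*π*x - 2*π*y) = 1 := by
    rw [Real.cos_sub, hc, hs]; nlinarith [Real.sin_sq_add_cos_sq (2*π*y)]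
  obtain ⟨t, ht⟩ := (Real.cos_eq_one_iff _).1 h1
  have hπ := Real.pi_pos
  have htx : (t:ℝ) = x - y := by
    have : (t:ℝ) * (2*π) = (x - y) * (2*π) := by linarith [ht]
    exact mul_right_cancel₀ (by positivity) this
  have ht0 : t = 0 := by
    have h2 : (-1:ℝ) < (t:ℝ) := by rw [htx]; linarith
    have h3 : (t:ℝ) < 1 := by rw [htx]; linarith
    have h2' : (-1:ℤ) < t := by exact_mod_cast h2
    have h3' : t < 1 := by exact_mod_cast h3
    omega
  rw [ht0] at htx; push_cast at htx; linarith

lemma Xc_Pp (x y z : ℝ) : Xc (Pp x) (Pp y) (Pp z) =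
    4 * Real.sin (π*(x-y)) * Real.sin (π*(y-z)) * Real.sin (π*(x-z)) := by
  simp only [Xc, Pp]
  have e : ∀ u : ℝ, 2*π*u = π*u + π*u := fun u => by ring
  rw [e x, e y, e z, Real.sin_add, Real.sin_add, Real.sin_add,
    Real.cos_add, Real.cos_add, Real.cos_add]
  rw [show π*(x-y) = π*x - π*y by ring, show π*(y-z) = π*y - π*z by ring,
    show π*(x-z) = π*x - π*z by ring, Real.sin_sub, Real.sin_sub, Real.sin_sub]
  have hx := Real.sin_sq_add_cos_sq (π*x)
  have hy := Real.sin_sq_add_cos_sq (π*y)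
  have hz := Real.sin_sq_add_cos_sq (π*z)
  set sx := Real.sin (π*x); set cx := Real.cos (π*x)
  set sy := Real.sin (π*y); set cy := Real.cos (π*y)
  set sz := Real.sin (π*z); set cz := Real.cos (π*z)
  linear_combination (-2*sz*cz + 4*cy^2*sz*cz + 2*sy*cy + -4*sy*cy*cz^2) * hx +
    (2*sz*cz + -4*cx^2*sz*cz + -2*sx*cx + 4*sx*cx*cz^2) * hy +
    (-2*sy*cy + 4*cx^2*sy*cy + 2*sx*cx + -4*sx*cx*cy^2) * hz

lemma Xc_swap (p q r : Pt) : Xc q p r = - Xc p q r := by simp only [Xc]; ring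

lemma pt_injOn (n : ℕ) (hn : 0 < n) : Set.InjOn (pt n) (Finset.range n) := by
  intro x hx y hy h
  simp only [Finset.coe_range, Set.mem_Iio] at hx hy
  rw [pt_eq_Pp, pt_eq_Pp] at h
  have hN : (0:ℝ) < n := by exact_mod_cast hn
  have hx' : (x:ℝ) < n := by exact_mod_cast hx
  have hy' : (y:ℝ) < n := by exact_mod_cast hy
  have := Pp_injOn (by positivity) ((div_lt_one hN).mpr hx')
    (by positivity) ((div_lt_one hN).mpr hy') h
  field_simp at this
  exact_mod_cast this

lemma ngon_card (n : ℕ) (hn : 0 < n) : (ngon n).card = n := by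
  rw [ngon, Finset.card_image_of_injOn (pt_injOn n hn), Finset.card_range]

lemma count_sides (n a b : ℕ) (hn : 0 < n) (hb : b < n) (hab : a < b) :
    ((ngon n).filter (fun r => 0 < Xc (pt n a) (pt n b) r)).card = b - a - 1 ∧
    ((ngon n).filter (fun r => Xc (pt n a) (pt n b) r < 0)).card = n - (b - a) - 1 := by
  have ha : a < n := lt_trans hab hb
  have hN : (0:ℝ) < n := by exact_mod_cast hn
  have hπ := Real.pi_pos
  have sgnpos : ∀ u v : ℕ, u < n → v < u →
      0 < Real.sin (π * (((u:ℝ) - v)/n)) := by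
    intro u v hu hvu
    have h1 : (v:ℝ) < u := by exact_mod_cast hvu
    have h2 : (u:ℝ) < n := by exact_mod_cast hu
    exact sin_sign (div_pos (by linarith) hN)
      ((div_lt_one hN).mpr (by linarith [(Nat.cast_nonneg v : (0:ℝ) ≤ v)]))
  have key : ∀ r : ℕ, r < n →
      (0 < Xc (pt n a) (pt n b) (pt n r) ↔ (a < r ∧ r < b)) ∧
      (Xc (pt n a) (pt n b) (pt n r) < 0 ↔ (r < a ∨ b < r)) := by
    intro r hr
    rw [pt_eq_Pp, pt_eq_Pp, pt_eq_Pp, Xc_Pp,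
      show π * ((a:ℝ)/n - (b:ℝ)/n) = -(π * (((b:ℝ)-a)/n)) by ring,
      show π * ((b:ℝ)/n - (r:ℝ)/n) = π * (((b:ℝ)-r)/n) by ring,
      show π * ((a:ℝ)/n - (r:ℝ)/n) = π * (((a:ℝ)-r)/n) by ring, Real.sin_neg]
    have s1 : 0 < Real.sin (π * (((b:ℝ)-a)/n)) := sgnpos b a hb hab
    rcases Nat.lt_trichotomy r a with h1 | h1 | h1
    · have hrb : r < b := lt_trans h1 hab
      have s2 : 0 < Real.sin (π * (((b:ℝ)-r)/n)) := sgnpos b r hb hrb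
      have s3 : 0 < Real.sin (π * (((a:ℝ)-r)/n)) := sgnpos a r ha h1
      constructor
      · exact iff_of_false (by intro hcon; nlinarith [mul_pos s2 s3]) (by omega)
      · exact iff_of_true (by nlinarith [mul_pos s2 s3]) (Or.inl h1)
    · have s3 : Real.sin (π * (((a:ℝ)-r)/n)) = 0 := by
        rw [show ((a:ℝ)-r) = 0 by rw [h1]; ring, zero_div, mul_zero, Real.sin_zero]
      constructor
      · exact iff_of_false (by rw [s3]; intro hcon; nlinarith) (by omega)
      · exact iff_of_false (by rw [s3]; intro hcon; nlinarith) (by omega)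
    · rcases Nat.lt_trichotomy r b with h2 | h2 | h2
      · have s2 : 0 < Real.sin (π * (((b:ℝ)-r)/n)) := sgnpos b r hb h2
        have s3 : Real.sin (π * (((a:ℝ)-r)/n)) < 0 := by
          have := sgnpos r a hr h1
          rw [show π * (((a:ℝ)-r)/n) = -(π * (((r:ℝ)-a)/n)) by ring, Real.sin_neg]
          linarith
        constructor
        · exact iff_of_true (by nlinarith [mul_pos s1 s2]) ⟨h1, h2⟩
        · exact iff_of_false (by intro hcon; nlinarith [mul_pos s1 s2]) (by omega)
      · have s2 : Real.sin (π * (((b:ℝ)-r)/n)) = 0 := by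
          rw [show ((b:ℝ)-r) = 0 by rw [h2]; ring, zero_div, mul_zero, Real.sin_zero]
        constructor
        · exact iff_of_false (by rw [s2]; intro hcon; nlinarith) (by omega)
        · exact iff_of_false (by rw [s2]; intro hcon; nlinarith) (by omega)
      · have s2 : Real.sin (π * (((b:ℝ)-r)/n)) < 0 := by
          have := sgnpos r b hr h2
          rw [show π * (((b:ℝ)-r)/n) = -(π * (((r:ℝ)-b)/n)) by ring, Real.sin_neg]
          linarith
        have s3 : Real.sin (π * (((a:ℝ)-r)/n)) < 0 := by
          have := sgnpos r a hr h1
          rw [show π * (((a:ℝ)-r)/n) = -(π * (((r:ℝ)-a)/n)) by ring, Real.sin_neg]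
          linarith
        constructor
        · exact iff_of_false (by intro hcon; nlinarith [mul_pos_of_neg_of_neg s2 s3])
            (by omega)
        · exact iff_of_true (by nlinarith [mul_pos_of_neg_of_neg s2 s3]) (Or.inr h2)
  have himg : ∀ (P : Pt → Prop),
      ((ngon n).filter (fun p => P p)).card
        = ((Finset.range n).filter (fun r => P (pt n r))).card := by
    intro P
    rw [ngon, Finset.filter_image]
    exact Finset.card_image_of_injOn
      ((pt_injOn n hn).mono (by
        intro x hx
        simp only [Finset.coe_filter, Set.mem_setOf_eq] at hx
        simpa using hx.1))
  constructor
  · rw [himg]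
    have e : (Finset.range n).filter (fun r => 0 < Xc (pt n a) (pt n b) (pt n r))
        = Finset.Ioo a b := by
      ext r
      simp only [Finset.mem_filter, Finset.mem_range, Finset.mem_Ioo]
      constructor
      · rintro ⟨hr, h⟩; exact ((key r hr).1).mp h
      · rintro ⟨h1, h2⟩
        have hr : r < n := lt_trans h2 hb
        exact ⟨hr, ((key r hr).1).mpr ⟨h1, h2⟩⟩
    rw [e, Nat.card_Ioo]
  · rw [himg]
    have e : (Finset.range n).filter (fun r => Xc (pt n a) (pt n b) (pt n r) < 0)
        = Finset.range n \ Finset.Icc a b := by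
      ext r
      simp only [Finset.mem_filter, Finset.mem_range, Finset.mem_sdiff, Finset.mem_Icc]
      constructor
      · rintro ⟨hr, h⟩
        have := ((key r hr).2).mp h
        exact ⟨hr, by omega⟩
      · rintro ⟨hr, h⟩
        exact ⟨hr, ((key r hr).2).mpr (by omega)⟩
    rw [e, Finset.card_sdiff_of_subset (by
        intro x hx
        simp only [Finset.mem_Icc] at hx
        simp only [Finset.mem_range]
        omega), Nat.card_Icc, Finset.card_range]
    omega

lemma halving_char (n a b : ℕ) (hn4 : 4 ≤ n) (heven : Even n)
    (h : Halving n a b) : (b : ZMod n) = (a : ZMod n) + ((n/2 : ℕ) : ZMod n) := by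
  have hn : 0 < n := by omega
  obtain ⟨m, hm⟩ := heven
  have hm2 : 2 ≤ m := by omega
  have hmn : n / 2 = m := by omega
  set a' := a % n with ha'
  set b' := b % n with hb'
  have ha'n : a' < n := Nat.mod_lt _ hn
  have hb'n : b' < n := Nat.mod_lt _ hn
  have hpa : pt n a = pt n a' := pt_congr hn (ZMod.natCast_mod a n).symm
  have hpb : pt n b = pt n b' := pt_congr hn (ZMod.natCast_mod b n).symm
  unfold Halving IsHalvingPts at h
  rw [ngon_card n hn, hpa, hpb] at h
  have hZa : ((a' : ℕ) : ZMod n) = (a : ZMod n) := ZMod.natCast_mod a n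
  have hZb : ((b' : ℕ) : ZMod n) = (b : ZMod n) := ZMod.natCast_mod b n
  rw [hmn, ← hZa, ← hZb]
  rcases Nat.lt_trichotomy a' b' with hlt | heq | hgt
  · have hc := count_sides n a' b' hn hb'n hlt
    simp only [Xc] at hc
    replace h : (n - 2) / 2 ≤ b' - a' - 1 ∧ (n - 2) / 2 ≤ n - (b' - a') - 1 := by
      rw [← hc.1, ← hc.2]; exact ⟨by convert h.1 using 2; ext; simp [Finset.mem_filter], by convert h.2 using 2; ext; simp [Finset.mem_filter]⟩
    have hab : b' = a' + m := by omega
    rw [hab]; push_cast; ring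
  · exfalso
    rw [heq] at h
    have h0 : ((ngon n).filter (fun r =>
        0 < ((pt n b').1 - (pt n b').1) * (r.2 - (pt n b').2)
          - ((pt n b').2 - (pt n b').2) * (r.1 - (pt n b').1))).card = 0 := by
      rw [Finset.filter_false_of_mem, Finset.card_empty]
      intro r _
      have e : ((pt n b').1 - (pt n b').1) * (r.2 - (pt n b').2)
          - ((pt n b').2 - (pt n b').2) * (r.1 - (pt n b').1) = 0 := by ring
      simp [e]
    rw [h0] at h
    omega
  · have hc := count_sides n b' a' hn ha'n hgt
    have e1 : (ngon n).filter (fun r => 0 < Xc (pt n a') (pt n b') r)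
        = (ngon n).filter (fun r => Xc (pt n b') (pt n a') r < 0) := by
      apply Finset.filter_congr
      intro r _
      have := Xc_swap (pt n b') (pt n a') r
      constructor <;> intro <;> [linarith; linarith]
    have e2 : (ngon n).filter (fun r => Xc (pt n a') (pt n b') r < 0)
        = (ngon n).filter (fun r => 0 < Xc (pt n b') (pt n a') r) := by
      apply Finset.filter_congr
      intro r _
      have := Xc_swap (pt n b') (pt n a') r
      constructor <;> intro <;> [linarith; linarith]
    simp only [Xc] at e1 e2
    replace h : (n - 2) / 2 ≤ n - (a' - b') - 1 ∧ (n - 2) / 2 ≤ a' - b' - 1 := by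
      rw [← hc.2, ← hc.1]; simp only [Xc]; rw [← e1, ← e2]; exact ⟨by convert h.1 using 2; ext; simp [Finset.mem_filter], by convert h.2 using 2; ext; simp [Finset.mem_filter]⟩
    simp only [Xc] at hc
    have hab : a' = b' + m := by omega
    have hz : (m : ZMod n) + m = 0 := by
      rw [← Nat.cast_add, ← hm, ZMod.natCast_self]
    rw [hab]
    push_cast
    rw [add_assoc, hz, add_zero]

lemma crossing (p q r s : Pt) (hC : 0 < Xc p q r) (hD : Xc p q s < 0)
    (hA : Xc r s p < 0) (hB : 0 < Xc r s q) :
    (segment ℝ p q ∩ segment ℝ r s).Nonempty := by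
  set A := Xc r s p with hA'
  set B := Xc r s q with hB'
  set C := Xc p q r with hC'
  set D := Xc p q s with hD'
  have hBA : 0 < B - A := by linarith
  have hkey : B - A = C - D := by
    simp only [hA', hB', hC', hD', Xc]; ring
  have hne : B - A ≠ 0 := ne_of_gt hBA
  refine ⟨(B/(B-A)) • p + (-A/(B-A)) • q, ?_, ?_⟩
  · exact ⟨B/(B-A), -A/(B-A), div_nonneg (by linarith) (by linarith),
      div_nonneg (by linarith) (by linarith), by field_simp; ring, rfl⟩
  · refine ⟨-D/(B-A), C/(B-A), div_nonneg (by linarith) (by linarith),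
      div_nonneg (by linarith) (by linarith), by
      rw [← add_div, div_eq_one_iff_eq hne]; linarith, ?_⟩
    have hid1 : -D * r.1 + C * s.1 = B * p.1 + -A * q.1 := by
      simp only [hA', hB', hC', hD', Xc]; ring
    have hid2 : -D * r.2 + C * s.2 = B * p.2 + -A * q.2 := by
      simp only [hA', hB', hC', hD', Xc]; ring
    apply Prod.ext
    · simp only [Prod.fst_add, Prod.smul_fst, smul_eq_mul]
      field_simp
      linear_combination hid1
    · simp only [Prod.snd_add, Prod.smul_snd, smul_eq_mul]
      field_simp
      linear_combination hid2

lemma core (i c k : ℕ) (hk1 : 1 ≤ k) (hkc : k + 1 ≤ c) :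
    (segment ℝ (Pp ((i:ℝ)/(2*(c:ℝ)+2))) (Pp (((i:ℝ)+(c:ℝ))/(2*(c:ℝ)+2))) ∩
     segment ℝ (Pp (((i:ℝ)+(k:ℝ))/(2*(c:ℝ)+2)))
       (Pp (((i:ℝ)+(k:ℝ)+(c:ℝ)+1)/(2*(c:ℝ)+2)))).Nonempty := by
  set N : ℝ := 2*(c:ℝ)+2 with hN
  have hk : (1:ℝ) ≤ (k:ℝ) := by exact_mod_cast hk1
  have hkc' : (k:ℝ)+1 ≤ (c:ℝ) := by exact_mod_cast hkc
  have hc1 : (2:ℝ) ≤ (c:ℝ) := by linarith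
  have hN0 : (0:ℝ) < N := by rw [hN]; linarith
  have s1 : 0 < Real.sin (π * ((c:ℝ)/N)) :=
    sin_sign (div_pos (by linarith) hN0) ((div_lt_one hN0).mpr (by rw [hN]; linarith))
  have s2 : 0 < Real.sin (π * (((c:ℝ)-(k:ℝ))/N)) :=
    sin_sign (div_pos (by linarith) hN0) ((div_lt_one hN0).mpr (by rw [hN]; linarith))
  have s3 : 0 < Real.sin (π * ((k:ℝ)/N)) :=
    sin_sign (div_pos (by linarith) hN0) ((div_lt_one hN0).mpr (by rw [hN]; linarith))
  have s4 : 0 < Real.sin (π * (((k:ℝ)+1)/N)) :=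
    sin_sign (div_pos (by linarith) hN0) ((div_lt_one hN0).mpr (by rw [hN]; linarith))
  have s5 : 0 < Real.sin (π * (((k:ℝ)+(c:ℝ)+1)/N)) :=
    sin_sign (div_pos (by linarith) hN0) ((div_lt_one hN0).mpr (by rw [hN]; linarith))
  have s6 : 0 < Real.sin (π * (((c:ℝ)+1)/N)) :=
    sin_sign (div_pos (by linarith) hN0) ((div_lt_one hN0).mpr (by rw [hN]; linarith))
  apply crossing
  · -- 0 < Xc p q r
    rw [Xc_Pp,
      show π * ((i:ℝ)/N - ((i:ℝ)+(c:ℝ))/N) = -(π * ((c:ℝ)/N)) by ring,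
      show π * (((i:ℝ)+(c:ℝ))/N - ((i:ℝ)+(k:ℝ))/N) = π * (((c:ℝ)-(k:ℝ))/N) by ring,
      show π * ((i:ℝ)/N - ((i:ℝ)+(k:ℝ))/N) = -(π * ((k:ℝ)/N)) by ring,
      Real.sin_neg, Real.sin_neg]
    nlinarith [mul_pos (mul_pos s1 s2) s3]
  · -- Xc p q s < 0
    rw [Xc_Pp,
      show π * ((i:ℝ)/N - ((i:ℝ)+(c:ℝ))/N) = -(π * ((c:ℝ)/N)) by ring,
      show π * (((i:ℝ)+(c:ℝ))/N - ((i:ℝ)+(k:ℝ)+(c:ℝ)+1)/N) = -(π * (((k:ℝ)+1)/N)) by ring,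
      show π * ((i:ℝ)/N - ((i:ℝ)+(k:ℝ)+(c:ℝ)+1)/N) = -(π * (((k:ℝ)+(c:ℝ)+1)/N)) by ring,
      Real.sin_neg, Real.sin_neg, Real.sin_neg]
    nlinarith [mul_pos (mul_pos s1 s4) s5]
  · -- Xc r s p < 0
    rw [Xc_Pp,
      show π * (((i:ℝ)+(k:ℝ))/N - ((i:ℝ)+(k:ℝ)+(c:ℝ)+1)/N) = -(π * (((c:ℝ)+1)/N)) by ring,
      show π * (((i:ℝ)+(k:ℝ)+(c:ℝ)+1)/N - (i:ℝ)/N) = π * (((k:ℝ)+(c:ℝ)+1)/N) by ring,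
      show π * (((i:ℝ)+(k:ℝ))/N - (i:ℝ)/N) = π * ((k:ℝ)/N) by ring,
      Real.sin_neg]
    nlinarith [mul_pos (mul_pos s6 s5) s3]
  · -- 0 < Xc r s q
    rw [Xc_Pp,
      show π * (((i:ℝ)+(k:ℝ))/N - ((i:ℝ)+(k:ℝ)+(c:ℝ)+1)/N) = -(π * (((c:ℝ)+1)/N)) by ring,
      show π * (((i:ℝ)+(k:ℝ)+(c:ℝ)+1)/N - ((i:ℝ)+(c:ℝ))/N) = π * (((k:ℝ)+1)/N) by ring,
      show π * (((i:ℝ)+(k:ℝ))/N - ((i:ℝ)+(c:ℝ))/N) = -(π * (((c:ℝ)-(k:ℝ))/N)) by ring,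
      Real.sin_neg, Real.sin_neg]
    nlinarith [mul_pos (mul_pos s6 s4) s2]


end AuxAHIH

/-- For even `n`, every almost-halving edge intersects every halving edge. -/
theorem almost_halving_intersects_halving (n : ℕ) (hn : 3 ≤ n) (heven : Even n)
    (i j a b : ℕ) (hij : pt n i ≠ pt n j) (hab : pt n a ≠ pt n b)
    (hah : Halving n i (j + 1)) (hh : Halving n a b) :
    EInter n i j a b := by
  obtain ⟨m, hm⟩ := heven
  have hm2 : 2 ≤ m := by omega
  have hn4 : 4 ≤ n := by omega
  have hn0 : 0 < n := by omega
  have hmn : n / 2 = m := by omega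
  set c := m - 1 with hc
  have h1 := halving_char n i (j+1) hn4 ⟨m, hm⟩ hah
  have h2 := halving_char n a b hn4 ⟨m, hm⟩ hh
  rw [hmn] at h1 h2
  push_cast at h1 h2
  have hzm : (m : ZMod n) + (m : ZMod n) = 0 := by
    rw [← Nat.cast_add, ← hm, ZMod.natCast_self]
  have hcm1 : ((c : ℕ) : ZMod n) = (m : ZMod n) - 1 := by
    rw [hc, Nat.cast_sub (by omega : 1 ≤ m)]; push_cast; ring
  set k := (a + i*(n-1)) % n with hkdef
  have hkn : k < n := Nat.mod_lt _ hn0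
  have hkz : (k : ZMod n) = (a : ZMod n) - (i : ZMod n) := by
    rw [hkdef, ZMod.natCast_mod]
    push_cast
    rw [Nat.cast_sub (by omega : 1 ≤ n), ZMod.natCast_self]
    ring
  have hka' : (a : ZMod n) = (i : ZMod n) + (k : ZMod n) := by rw [hkz]; ring
  have hka : (a : ZMod n) = ((i + k : ℕ) : ZMod n) := by push_cast; rw [hkz]; ring
  have hj : pt n j = pt n (i + c) := by
    apply pt_congr hn0
    push_cast
    linear_combination h1 - hcm1
  have e1 : pt n i = Pp ((i:ℝ)/(2*(c:ℝ)+2)) := by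
    rw [pt_eq_Pp]
    congr 1
    have h' : n = 2*c+2 := by omega
    rw [h']; push_cast; ring
  have hnr : (n:ℝ) = 2*(c:ℝ)+2 := by
    have h' : n = 2*c+2 := by omega
    rw [h']; push_cast; ring
  have e2 : pt n j = Pp (((i:ℝ)+(c:ℝ))/(2*(c:ℝ)+2)) := by
    rw [hj, pt_eq_Pp, hnr]; congr 1; push_cast; ring
  rcases (by omega : k = 0 ∨ (1 ≤ k ∧ k + 1 ≤ c) ∨ k = c ∨ k = m ∨
      (m + 1 ≤ k ∧ k + 2 ≤ n) ∨ k = n - 1) with hk | hk | hk | hk | hk | hk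
  · -- pt a = pt i
    rw [hk] at hkz; push_cast at hkz
    have hpai : pt n a = pt n i := pt_congr hn0 (by linear_combination -hkz)
    exact ⟨pt n a, by rw [hpai]; exact left_mem_segment ℝ _ _, left_mem_segment ℝ _ _⟩
  · -- main crossing case
    have e3 : pt n a = Pp (((i:ℝ)+(k:ℝ))/(2*(c:ℝ)+2)) := by
      rw [pt_congr hn0 hka, pt_eq_Pp, hnr]; congr 1; push_cast; ring
    have e4 : pt n b = Pp (((i:ℝ)+(k:ℝ)+(c:ℝ)+1)/(2*(c:ℝ)+2)) := by
      have hb' : (b : ZMod n) = ((i + k + c + 1 : ℕ) : ZMod n) := by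
        push_cast
        linear_combination h2 + hka' - hcm1
      rw [pt_congr hn0 hb', pt_eq_Pp, hnr]; congr 1; push_cast; ring
    unfold EInter
    rw [e1, e2, e3, e4]
    exact core i c k hk.1 hk.2
  · -- pt a = pt j
    rw [hk] at hkz
    have hpaj : pt n a = pt n j := by
      apply pt_congr hn0
      linear_combination -hkz + hcm1 - h1
    exact ⟨pt n a, by rw [hpaj]; exact right_mem_segment ℝ _ _, left_mem_segment ℝ _ _⟩
  · -- pt b = pt i
    rw [hk] at hkz
    have hpbi : pt n b = pt n i := by
      apply pt_congr hn0
      linear_combination h2 - hkz + hzm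
    exact ⟨pt n b, by rw [hpbi]; exact left_mem_segment ℝ _ _, right_mem_segment ℝ _ _⟩
  · -- swapped crossing case
    set k' := k - m with hk'
    have hk'1 : 1 ≤ k' := by omega
    have hk'c : k' + 1 ≤ c := by omega
    have hkk : (k : ZMod n) = ((k' : ℕ) : ZMod n) + ((m : ℕ) : ZMod n) := by
      have h' : k = k' + m := by omega
      rw [h']; push_cast; ring
    have e3 : pt n b = Pp (((i:ℝ)+(k':ℝ))/(2*(c:ℝ)+2)) := by
      have hb' : (b : ZMod n) = ((i + k' : ℕ) : ZMod n) := by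
        push_cast
        linear_combination h2 + hka' + hkk + hzm
      rw [pt_congr hn0 hb', pt_eq_Pp, hnr]; congr 1; push_cast; ring
    have e4 : pt n a = Pp (((i:ℝ)+(k':ℝ)+(c:ℝ)+1)/(2*(c:ℝ)+2)) := by
      have ha' : (a : ZMod n) = ((i + k' + c + 1 : ℕ) : ZMod n) := by
        push_cast
        linear_combination hka' + hkk - hcm1
      rw [pt_congr hn0 ha', pt_eq_Pp, hnr]; congr 1; push_cast; ring
    unfold EInter
    rw [e1, e2, segment_symm ℝ (pt n a) (pt n b), e3, e4]
    exact core i c k' hk'1 hk'c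
  · -- pt b = pt j
    rw [hk] at hkz
    have hn1 : ((n - 1 : ℕ) : ZMod n) = -1 := by
      rw [Nat.cast_sub (by omega : 1 ≤ n), ZMod.natCast_self]; ring
    rw [hn1] at hkz
    have hpbj : pt n b = pt n j := by
      apply pt_congr hn0
      linear_combination h2 - hkz - h1
    exact ⟨pt n b, by rw [hpbj]; exact right_mem_segment ℝ _ _, right_mem_segment ℝ _ _⟩
end
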